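/- Let μ be a probability measure on S^{d-1} with mean M, R = ‖M‖, U = M/R (R > 0), and β ∈ (0, π/2). Then μ(S^{d-1} \ (S_β^+(U) ∪ S_β^−(U))) ≥ 1/2 − (R + (1+cos β)·μ(S_β^−(U)))/(2 cos β), where S_β^±(U) are the spherical caps of angle β around ±U. -/

import Mathlib

open MeasureTheory
open scoped RealInnerProductSpace

/-- for a probability measure `μ` on the unit sphere with mean `M`,
`R = ‖M‖ > 0`, `U = M/R`, and `β ∈ (0, π/2)`, the equatorial band outside both caps
`S_β^±(U)` has mass at least `1/2 − (R + (1+cos β)·μ(S_β^-(U)))/(2 cos β)`. -/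
theorem stmt12 {d : ℕ} (μ : Measure (EuclideanSpace ℝ (Fin d))) [IsProbabilityMeasure μ]
    (hsphere : μ {x | ‖x‖ ≠ 1} = 0)
    (hint : Integrable (fun y : EuclideanSpace ℝ (Fin d) => y) μ)
    (M : EuclideanSpace ℝ (Fin d)) (hM : M = ∫ y, y ∂μ)
    (R : ℝ) (hR : R = ‖M‖) (hRpos : 0 < R)
    (U : EuclideanSpace ℝ (Fin d)) (hU : U = R⁻¹ • M)
    (β : ℝ) (hβ : β ∈ Set.Ioo 0 (Real.pi / 2)) :
    ENNReal.ofReal (1 / 2 -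
        (R + (1 + Real.cos β) *
          (μ {x | ‖x‖ = 1 ∧ Real.cos β ≤ ⟪x, -U⟫}).toReal) / (2 * Real.cos β))
      ≤ μ ({x | ‖x‖ = 1} \
            ({x | ‖x‖ = 1 ∧ Real.cos β ≤ ⟪x, U⟫} ∪ {x | ‖x‖ = 1 ∧ Real.cos β ≤ ⟪x, -U⟫})) := by
  set c := Real.cos β with hc
  have hcpos : 0 < c := Real.cos_pos_of_mem_Ioo ⟨by linarith [hβ.1, Real.pi_pos], hβ.2⟩
  have hcle : c ≤ 1 := Real.cos_le_one β
  set S : Set (EuclideanSpace ℝ (Fin d)) := {x | ‖x‖ = 1} with hSdef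
  set A : Set (EuclideanSpace ℝ (Fin d)) := {x | ‖x‖ = 1 ∧ c ≤ ⟪x, U⟫} with hAdef
  set B : Set (EuclideanSpace ℝ (Fin d)) := {x | ‖x‖ = 1 ∧ c ≤ ⟪x, -U⟫} with hBdef
  set E : Set (EuclideanSpace ℝ (Fin d)) := S \ (A ∪ B) with hEdef
  have hS : MeasurableSet S := (isClosed_eq continuous_norm continuous_const).measurableSet
  have hinner : Continuous fun x : EuclideanSpace ℝ (Fin d) => ⟪x, U⟫ :=
    continuous_id.inner continuous_const
  have hinner' : Continuous fun x : EuclideanSpace ℝ (Fin d) => ⟪x, -U⟫ :=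
    continuous_id.inner continuous_const
  have hA : MeasurableSet A :=
    ((isClosed_eq continuous_norm continuous_const).inter
      (isClosed_le continuous_const hinner)).measurableSet
  have hB : MeasurableSet B :=
    ((isClosed_eq continuous_norm continuous_const).inter
      (isClosed_le continuous_const hinner')).measurableSet
  have hE : MeasurableSet E := hS.diff (hA.union hB)
  have hUnorm : ‖U‖ = 1 := by
    rw [hU, norm_smul, hR]
    simp [abs_of_pos (inv_pos.mpr hRpos)]
    rw [inv_mul_cancel₀ (by rw [← hR]; exact hRpos.ne')]
  have hABdisj : Disjoint A B := by
    rw [Set.disjoint_left]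
    rintro x ⟨-, h1⟩ ⟨-, h2⟩
    rw [inner_neg_right] at h2
    linarith
  have hAS : A ⊆ S := fun x hx => hx.1
  have hBS : B ⊆ S := fun x hx => hx.1
  have hSsplit : S = (A ∪ B) ∪ E := by
    rw [hEdef, Set.union_diff_cancel (Set.union_subset hAS hBS)]
  -- measure of S is 1
  have hScompl : μ Sᶜ = 0 := by
    have : Sᶜ = {x | ‖x‖ ≠ 1} := rfl
    rw [this, hsphere]
  have hmuS : μ S = 1 := by
    have h := measure_add_measure_compl hS (μ := μ)
    rw [hScompl, add_zero] at h
    simpa using h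
  have hsum : μ A + μ B + μ E = 1 := by
    rw [← hmuS, hSsplit, measure_union (by
        rw [Set.disjoint_left]; rintro x hx ⟨-, hx2⟩; exact hx2 hx) hE,
      measure_union hABdisj hB]
  have hAfin : μ A ≠ ⊤ := (measure_lt_top μ A).ne
  have hBfin : μ B ≠ ⊤ := (measure_lt_top μ B).ne
  have hEfin : μ E ≠ ⊤ := (measure_lt_top μ E).ne
  set a := (μ A).toReal
  set b := (μ B).toReal
  set e := (μ E).toReal
  have hsumR : a + b + e = 1 := by
    have := congrArg ENNReal.toReal hsum
    rwa [ENNReal.toReal_add (by finiteness) hEfin, ENNReal.toReal_add hAfin hBfin,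
      ENNReal.toReal_one] at this
  have hanneg : 0 ≤ a := ENNReal.toReal_nonneg
  have hbnneg : 0 ≤ b := ENNReal.toReal_nonneg
  have henneg : 0 ≤ e := ENNReal.toReal_nonneg
  -- integral of f
  set f : EuclideanSpace ℝ (Fin d) → ℝ := fun y => ⟪y, U⟫ with hfdef
  have hf : Integrable f μ := by
    have h := (innerSL ℝ U).integrable_comp hint
    have heq : (fun y => (innerSL ℝ U) y) = f := by
      funext y
      simp only [innerSL_apply_apply, hfdef]
      exact real_inner_comm y U
    rwa [heq] at h
  have hintf : ∫ y, f y ∂μ = R := by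
    have h1 : ∫ y, ⟪U, y⟫ ∂μ = ⟪U, M⟫ := by rw [hM]; exact integral_inner hint U
    have h2 : ⟪U, M⟫ = R := by
      rw [hU, real_inner_smul_left, real_inner_self_eq_norm_sq, ← hR]
      field_simp
    have heq : f = fun y => ⟪U, y⟫ := funext fun y => real_inner_comm U y
    rw [heq, h1, h2]
  have hrestr : μ.restrict S = μ := by
    apply Measure.restrict_eq_self_of_ae_mem
    exact mem_ae_iff.mpr (by simpa using hScompl)
  have hsplitInt : ∫ y, f y ∂μ = (∫ y in A, f y ∂μ) + (∫ y in B, f y ∂μ) +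
      (∫ y in E, f y ∂μ) := by
    conv_lhs => rw [← hrestr]
    rw [show (S : Set _) = (A ∪ B) ∪ E from hSsplit,
      setIntegral_union (by
        rw [Set.disjoint_left]; rintro x hx ⟨-, hx2⟩; exact hx2 hx) hE
        (hf.integrableOn) (hf.integrableOn),
      setIntegral_union hABdisj hB hf.integrableOn hf.integrableOn]
  -- bounds on pieces
  have hboundA : c * a ≤ ∫ y in A, f y ∂μ :=
    setIntegral_ge_of_const_le_real hA hAfin (fun x hx => hx.2) hf.integrableOn
  have hboundB : (-1 : ℝ) * b ≤ ∫ y in B, f y ∂μ := by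
    apply setIntegral_ge_of_const_le_real hB hBfin _ hf.integrableOn
    intro x hx
    have := abs_real_inner_le_norm x U
    rw [hx.1, hUnorm] at this
    simp only [one_mul] at this
    have := abs_le.mp this
    linarith [this.1]
  have hboundE : (-c) * e ≤ ∫ y in E, f y ∂μ := by
    apply setIntegral_ge_of_const_le_real hE hEfin _ hf.integrableOn
    rintro x ⟨hx1, hx2⟩
    by_contra h
    push_neg at h
    exact hx2 (Or.inr ⟨hx1, by rw [inner_neg_right]; linarith⟩)
  have hRge : c * a + (-1) * b + (-c) * e ≤ R := by
    rw [← hintf, hsplitInt]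
    gcongr
  -- final arithmetic
  have hgoal : 1 / 2 - (R + (1 + c) * b) / (2 * c) ≤ e := by
    have h2c : 0 < 2 * c := by linarith
    have key : 1 / 2 - e ≤ (R + (1 + c) * b) / (2 * c) := by
      rw [le_div_iff₀ h2c]
      nlinarith
    linarith
  exact ENNReal.ofReal_le_of_le_toReal hgoal
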